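/- For n ≥ 4 and real x with x > (4/5)·n², the inequality x^{n−3} > ∑_{j≥2} C(n−1, 2j)·x^{n−1−2j} holds, where the sum is over j ≥ 2 with n−1−2j ≥ 0 (i.e. x^{n−3} > C(n−1,4)·x^{n−5} + C(n−1,6)·x^{n−7} + ⋯). -/
import Mathlib

lemma geo_half (K : ℕ) (hK : 1 ≤ K) :
    ∑ j ∈ Finset.Icc 2 K, (1/2 : ℝ) ^ j = 1/2 - (1/2) ^ K := by
  induction K, hK using Nat.le_induction with
  | base => simp
  | succ K hK ih =>
    rw [Finset.sum_Icc_succ_top (by omega), ih]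
    ring

lemma fac_ge (j : ℕ) :
    (2 : ℝ) ^ (j + 2) * (5/4) ^ (2 * j + 2) ≤ ((2 * j + 4).factorial : ℝ) := by
  induction j with
  | zero => norm_num [Nat.factorial]
  | succ j ih =>
    have h1 : 2 * (j + 1) + 4 = (2 * j + 4) + 2 := by ring
    rw [h1]
    have h2 : (((2 * j + 4) + 2).factorial : ℝ)
        = ((2 * j + 4) + 2) * (((2 * j + 4) + 1)) * ((2 * j + 4).factorial : ℝ) := by
      rw [Nat.factorial_succ, Nat.factorial_succ]; push_cast; ring
    rw [h2]
    have h3 : (2 : ℝ) ^ (j + 1 + 2) * (5/4) ^ (2 * (j + 1) + 2)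
        = (2 * (5/4) ^ 2) * ((2 : ℝ) ^ (j + 2) * (5/4) ^ (2 * j + 2)) := by ring
    rw [h3]
    have hfpos : (0:ℝ) < ((2 * j + 4).factorial : ℝ) := by positivity
    have hj0 : (0:ℝ) ≤ (j:ℝ) := by positivity
    nlinarith [ih, hfpos, mul_nonneg hj0 hfpos.le, mul_nonneg (mul_nonneg hj0 hj0) hfpos.le]

theorem ineq_four (n : ℕ) (hn : 4 ≤ n) (x : ℝ) (hx : x > 4 / 5 * (n : ℝ) ^ 2) :
    x ^ (n - 3) >
      ∑ j ∈ Finset.Icc 2 ((n - 1) / 2), ((n - 1).choose (2 * j) : ℝ) * x ^ (n - 1 - 2 * j) := by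
  have hn1 : (1 : ℝ) ≤ (n : ℝ) := by exact_mod_cast (show 1 ≤ n by omega)
  have hx0 : 0 < x := lt_of_le_of_lt (by positivity) hx
  have hxn3 : 0 < x ^ (n - 3) := pow_pos hx0 _
  -- per-term bound
  have key : ∀ j ∈ Finset.Icc 2 ((n - 1) / 2),
      ((n - 1).choose (2 * j) : ℝ) * x ^ (n - 1 - 2 * j) ≤ (1/2 : ℝ) ^ j * x ^ (n - 3) := by
    intro j hj
    simp only [Finset.mem_Icc] at hj
    obtain ⟨hj2, hjK⟩ := hj
    have h2j : 2 * j ≤ n - 1 := by omega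
    have hexp : n - 3 = (n - 1 - 2 * j) + (2 * j - 2) := by omega
    rw [hexp, pow_add]
    rw [show ((n-1).choose (2*j) : ℝ) * x ^ (n - 1 - 2 * j)
        = x ^ (n - 1 - 2 * j) * ((n-1).choose (2*j) : ℝ) by ring,
      show (1/2:ℝ) ^ j * (x ^ (n - 1 - 2 * j) * x ^ (2*j - 2))
        = x ^ (n - 1 - 2 * j) * ((1/2:ℝ) ^ j * x ^ (2*j - 2)) by ring]
    apply mul_le_mul_of_nonneg_left _ (by positivity)
    -- choose bound
    have hc : ((n-1).choose (2*j) : ℝ) * ((2*j).factorial : ℝ) ≤ (n : ℝ) ^ (4*j - 4) := by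
      have h1 : (n-1).choose (2*j) * (2*j).factorial ≤ (n-1) ^ (2*j) := by
        rw [mul_comm, ← Nat.descFactorial_eq_factorial_mul_choose]
        exact Nat.descFactorial_le_pow _ _
      have h2 : ((n-1:ℕ) : ℝ) ^ (2*j) ≤ (n : ℝ) ^ (2*j) := by
        apply pow_le_pow_left₀ (by positivity)
        exact_mod_cast Nat.sub_le n 1
      have h3 : (n : ℝ) ^ (2*j) ≤ (n : ℝ) ^ (4*j - 4) :=
        pow_le_pow_right₀ hn1 (by omega)
      calc ((n-1).choose (2*j) : ℝ) * ((2*j).factorial : ℝ)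
          = (((n-1).choose (2*j) * (2*j).factorial : ℕ) : ℝ) := by push_cast; ring
        _ ≤ ((n-1:ℕ) : ℝ) ^ (2*j) := by exact_mod_cast h1
        _ ≤ (n : ℝ) ^ (2*j) := h2
        _ ≤ (n : ℝ) ^ (4*j - 4) := h3
    -- factorial bound
    have hf : (2 : ℝ) ^ j * (5/4) ^ (2*j - 2) ≤ ((2*j).factorial : ℝ) := by
      have := fac_ge (j - 2)
      have e1 : (j - 2) + 2 = j := by omega
      have e2 : 2 * (j - 2) + 2 = 2*j - 2 := by omega
      have e3 : 2 * (j - 2) + 4 = 2*j := by omega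
      rwa [e1, e2, e3] at this
    -- x power bound
    have hxp : ((4:ℝ)/5) ^ (2*j - 2) * (n : ℝ) ^ (4*j - 4) ≤ x ^ (2*j - 2) := by
      have : ((4:ℝ)/5 * (n:ℝ)^2) ^ (2*j - 2) ≤ x ^ (2*j - 2) :=
        pow_le_pow_left₀ (by positivity) (le_of_lt hx) _
      calc ((4:ℝ)/5) ^ (2*j - 2) * (n : ℝ) ^ (4*j - 4)
          = ((4:ℝ)/5 * (n:ℝ)^2) ^ (2*j - 2) := by
            rw [mul_pow, ← pow_mul]
            congr 2
            omega
        _ ≤ x ^ (2*j - 2) := this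
    -- combine
    have hprod : (1:ℝ) ≤ (1/2:ℝ) ^ j * (4/5) ^ (2*j - 2) * ((2*j).factorial : ℝ) := by
      have h4 : ((1/2:ℝ) ^ j * (4/5) ^ (2*j - 2)) * ((2:ℝ) ^ j * (5/4) ^ (2*j - 2)) = 1 := by
        rw [show (1/2:ℝ) ^ j * (4/5) ^ (2*j-2) * ((2:ℝ)^j * (5/4)^(2*j-2))
          = ((1/2:ℝ) * 2) ^ j * ((4/5:ℝ) * (5/4)) ^ (2*j-2) by rw [mul_pow, mul_pow]; ring]
        norm_num
      calc (1:ℝ) = ((1/2:ℝ) ^ j * (4/5) ^ (2*j - 2)) * ((2:ℝ) ^ j * (5/4) ^ (2*j - 2)) :=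
            h4.symm
        _ ≤ ((1/2:ℝ) ^ j * (4/5) ^ (2*j - 2)) * ((2*j).factorial : ℝ) := by
            apply mul_le_mul_of_nonneg_left hf (by positivity)
    have hC0 : (0:ℝ) ≤ ((n-1).choose (2*j) : ℝ) := by positivity
    calc ((n-1).choose (2*j) : ℝ)
        ≤ ((n-1).choose (2*j) : ℝ) * ((1/2:ℝ) ^ j * (4/5) ^ (2*j - 2) * ((2*j).factorial : ℝ)) := by
          nlinarith
      _ = (1/2:ℝ) ^ j * (4/5) ^ (2*j - 2) * (((n-1).choose (2*j) : ℝ) * ((2*j).factorial : ℝ)) := by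
          ring
      _ ≤ (1/2:ℝ) ^ j * (4/5) ^ (2*j - 2) * ((n : ℝ) ^ (4*j - 4)) := by
          apply mul_le_mul_of_nonneg_left hc (by positivity)
      _ = (1/2:ℝ) ^ j * ((4/5:ℝ) ^ (2*j - 2) * (n : ℝ) ^ (4*j - 4)) := by ring
      _ ≤ (1/2:ℝ) ^ j * x ^ (2*j - 2) := by
          apply mul_le_mul_of_nonneg_left hxp (by positivity)
  have hsum := Finset.sum_le_sum key
  rw [← Finset.sum_mul] at hsum
  rcases Nat.lt_or_ge ((n-1)/2) 2 with hK | hK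
  · rw [Finset.Icc_eq_empty (by omega)]
    simpa using hxn3
  · have hgeo : ∑ j ∈ Finset.Icc 2 ((n-1)/2), (1/2:ℝ)^j ≤ 1/2 := by
      rw [geo_half _ (by omega)]
      have : (0:ℝ) < (1/2)^((n-1)/2) := by positivity
      linarith
    calc ∑ j ∈ Finset.Icc 2 ((n - 1) / 2), ((n - 1).choose (2 * j) : ℝ) * x ^ (n - 1 - 2 * j)
        ≤ (∑ j ∈ Finset.Icc 2 ((n-1)/2), (1/2:ℝ)^j) * x ^ (n - 3) := hsum
      _ ≤ (1/2) * x ^ (n-3) := by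
          apply mul_le_mul_of_nonneg_right hgeo (le_of_lt hxn3)
      _ < x ^ (n - 3) := by linarith
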